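/- Let (X, ‖·‖) be a separable real Banach space whose linear isometry group acts transitively on the unit sphere. Then the norm is Gâteaux differentiable; equivalently, every point x of the unit sphere has a unique support functional, i.e., a unique φ ∈ X* with ‖φ‖ = 1 and φ(x) = 1. -/

import Mathlib

open Metric Set

section Aux

variable {X : Type*} [NormedAddCommGroup X] [NormedSpace ℝ X]

/-- The bad set: points where the directional derivative gap in direction `h`
is at least `1/(n+1)`. -/
def badGapSet (h : X) (n : ℕ) : Set X :=
  {x | ∀ s < (0:ℝ), ∀ t > (0:ℝ),
    (1:ℝ)/(n+1) ≤ (‖x + t • h‖ - ‖x‖)/t - (‖x + s • h‖ - ‖x‖)/s}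

lemma isClosed_badGapSet (h : X) (n : ℕ) : IsClosed (badGapSet h n) := by
  have : badGapSet h n = ⋂ (s : ℝ) (_ : s < 0) (t : ℝ) (_ : t > 0),
      {x : X | (1:ℝ)/(n+1) ≤ (‖x + t • h‖ - ‖x‖)/t - (‖x + s • h‖ - ‖x‖)/s} := by
    ext x; simp [badGapSet]
  rw [this]
  refine isClosed_iInter fun s => isClosed_iInter fun hs => isClosed_iInter fun t =>
    isClosed_iInter fun ht => isClosed_le continuous_const ?_
  fun_prop

lemma abs_slope_le (x h : X) (t : ℝ) (ht : t ≠ 0) :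
    |(‖x + t • h‖ - ‖x‖)/t| ≤ ‖h‖ := by
  rw [abs_div]
  rw [div_le_iff₀ (abs_pos.2 ht)]
  have h1 : |‖x + t • h‖ - ‖x‖| ≤ ‖(x + t • h) - x‖ := abs_norm_sub_norm_le _ _
  have h2 : ‖(x + t • h) - x‖ = |t| * ‖h‖ := by
    simp [norm_smul, abs_mul]
  calc |‖x + t • h‖ - ‖x‖| ≤ |t| * ‖h‖ := h1.trans_eq h2
    _ = ‖h‖ * |t| := by ring

lemma interior_badGapSet (h : X) (n : ℕ) : interior (badGapSet h n) = ∅ := by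
  by_contra hne
  obtain ⟨x₀, hx₀⟩ := Set.nonempty_iff_ne_empty.2 hne
  obtain ⟨r, hr, hball⟩ := Metric.isOpen_iff.1 isOpen_interior x₀ hx₀
  replace hball : ball x₀ r ⊆ badGapSet h n := hball.trans interior_subset
  have hx₀mem : x₀ ∈ badGapSet h n := hball (mem_ball_self hr)
  have hn1 : (0:ℝ) < 1/(n+1) := by positivity
  -- h ≠ 0
  have hh : h ≠ 0 := by
    rintro rfl
    have := hx₀mem (-1) (by norm_num) 1 (by norm_num)
    simp at this
    linarith
  obtain ⟨m, hm⟩ := exists_nat_gt (2 * (n+1) * ‖h‖)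
  set δ : ℝ := r / ((m+2) * (‖h‖+1)) with hδdef
  have hδ : 0 < δ := by positivity
  set f : ℕ → ℝ := fun i => ‖x₀ + ((i:ℝ) * δ) • h‖ with hf
  set σ : ℕ → ℝ := fun i => (f (i+1) - f i) / δ with hσ
  -- points on the segment are in the ball
  have hmem : ∀ i : ℕ, i ≤ m + 1 → x₀ + ((i:ℝ) * δ) • h ∈ ball x₀ r := by
    intro i hi
    rw [mem_ball, dist_eq_norm]
    have : ‖x₀ + ((i:ℝ) * δ) • h - x₀‖ = (i:ℝ) * δ * ‖h‖ := by
      rw [add_sub_cancel_left, norm_smul, Real.norm_eq_abs,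
        abs_of_nonneg (by positivity)]
    rw [this]
    have hi' : (i:ℝ) ≤ (m:ℝ) + 1 := by exact_mod_cast hi
    calc (i:ℝ) * δ * ‖h‖ ≤ ((m:ℝ)+1) * δ * ‖h‖ := by
          apply mul_le_mul_of_nonneg_right (mul_le_mul_of_nonneg_right hi' hδ.le)
            (norm_nonneg h)
      _ < ((m:ℝ)+2) * (‖h‖+1) * δ := by
          nlinarith [mul_pos hδ (by positivity : (0:ℝ) < ‖h‖ + (m:ℝ) + 2),
            norm_nonneg h]
      _ = r := by
          rw [hδdef]; field_simp
  -- slope bound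
  have hσbound : ∀ i : ℕ, i ≤ m → |σ i| ≤ ‖h‖ := by
    intro i hi
    have := abs_slope_le (x₀ + ((i:ℝ) * δ) • h) h δ hδ.ne'
    have heq : x₀ + ((i:ℝ) * δ) • h + δ • h = x₀ + (((i:ℝ)+1) * δ) • h := by
      rw [add_assoc, ← add_smul]; ring_nf
    rw [heq] at this
    simpa [hσ, hf, push_cast] using this
  -- increments
  have hstep : ∀ i : ℕ, i + 1 ≤ m → 1/((n:ℝ)+1) ≤ σ (i+1) - σ i := by
    intro i hi
    have hp : x₀ + (((i:ℝ)+1) * δ) • h ∈ badGapSet h n := by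
      apply hball
      have := hmem (i+1) (by omega)
      simpa [push_cast] using this
    have := hp (-δ) (neg_neg_iff_pos.2 hδ) δ hδ
    have e1 : x₀ + (((i:ℝ)+1) * δ) • h + δ • h = x₀ + (((i:ℝ)+2) * δ) • h := by
      rw [add_assoc, ← add_smul]; ring_nf
    have e2 : x₀ + (((i:ℝ)+1) * δ) • h + (-δ) • h = x₀ + ((i:ℝ) * δ) • h := by
      rw [add_assoc, ← add_smul]; ring_nf
    rw [e1, e2] at this
    have e3 : (‖x₀ + ((i:ℝ) * δ) • h‖ - ‖x₀ + (((i:ℝ)+1) * δ) • h‖) / (-δ)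
        = (f (i+1) - f i) / δ := by
      rw [div_neg, ← neg_div, neg_sub]
      congr 2 <;> simp [hf, push_cast]
    have e4 : (‖x₀ + (((i:ℝ)+2) * δ) • h‖ - ‖x₀ + (((i:ℝ)+1) * δ) • h‖) / δ
        = (f (i+2) - f (i+1)) / δ := by
      congr 3 <;> simp [hf, push_cast]
    rw [e3, e4] at this
    simpa [hσ] using this
  -- accumulate
  have hacc : ∀ i : ℕ, i ≤ m → σ 0 + (i:ℝ) * (1/((n:ℝ)+1)) ≤ σ i := by
    intro i
    induction i with
    | zero => intro _; simp
    | succ j ih =>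
      intro hj
      have h1 := ih (by omega)
      have h2 := hstep j hj
      push_cast
      nlinarith
  have h1 := hacc m le_rfl
  have h2 := hσbound m le_rfl
  have h3 := hσbound 0 (Nat.zero_le _)
  have h4 : 2 * ‖h‖ < (m:ℝ) * (1/((n:ℝ)+1)) := by
    rw [mul_one_div, lt_div_iff₀ (by positivity : (0:ℝ) < (n:ℝ)+1)]
    nlinarith
  have := abs_le.1 h2
  have := abs_le.1 h3
  linarith

end Aux


section Aux2

variable {X : Type*} [NormedAddCommGroup X] [NormedSpace ℝ X]

lemma support_le_slope (z : X) (φ : X →L[ℝ] ℝ) (hφ : ‖φ‖ ≤ 1) (hφz : φ z = ‖z‖)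
    (h : X) :
    (∀ t > (0:ℝ), φ h ≤ (‖z + t • h‖ - ‖z‖)/t) ∧
    (∀ s < (0:ℝ), (‖z + s • h‖ - ‖z‖)/s ≤ φ h) := by
  have key : ∀ t : ℝ, ‖z‖ + t * φ h ≤ ‖z + t • h‖ := by
    intro t
    have h1 : φ (z + t • h) ≤ ‖z + t • h‖ := by
      calc φ (z + t • h) ≤ ‖φ (z + t • h)‖ := Real.le_norm_self _
        _ ≤ ‖φ‖ * ‖z + t • h‖ := φ.le_opNorm _
        _ ≤ 1 * ‖z + t • h‖ := by
            exact mul_le_mul_of_nonneg_right hφ (norm_nonneg _)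
        _ = ‖z + t • h‖ := one_mul _
    rw [map_add, map_smul, smul_eq_mul, hφz] at h1
    exact h1
  constructor
  · intro t ht
    rw [le_div_iff₀ ht, mul_comm]
    linarith [key t]
  · intro s hs
    rw [div_le_iff_of_neg hs, mul_comm]
    linarith [key s]

lemma eq_of_gap_small (u : ℕ → X) (hu : DenseRange u) (z : X)
    (hz : ∀ k n : ℕ, ∃ s < (0:ℝ), ∃ t > (0:ℝ),
      (‖z + t • u k‖ - ‖z‖)/t - (‖z + s • u k‖ - ‖z‖)/s < 1/(n+1))
    (φ ψ : X →L[ℝ] ℝ) (hφ : ‖φ‖ ≤ 1) (hψ : ‖ψ‖ ≤ 1)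
    (hφz : φ z = ‖z‖) (hψz : ψ z = ‖z‖) : φ = ψ := by
  have hk : ∀ k, φ (u k) = ψ (u k) := by
    intro k
    have habs : ∀ n : ℕ, |φ (u k) - ψ (u k)| < 1/((n:ℝ)+1) := by
      intro n
      obtain ⟨s, hs, t, ht, hgap⟩ := hz k n
      obtain ⟨hφ1, hφ2⟩ := support_le_slope z φ hφ hφz (u k)
      obtain ⟨hψ1, hψ2⟩ := support_le_slope z ψ hψ hψz (u k)
      rw [abs_sub_lt_iff]
      constructor
      · linarith [hφ1 t ht, hψ2 s hs]
      · linarith [hψ1 t ht, hφ2 s hs]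
    have : |φ (u k) - ψ (u k)| ≤ 0 := by
      by_contra hc
      push_neg at hc
      obtain ⟨n, hn⟩ := exists_nat_one_div_lt hc
      exact absurd (habs n) (not_lt.2 hn.le)
    have := abs_nonneg (φ (u k) - ψ (u k))
    have : |φ (u k) - ψ (u k)| = 0 := le_antisymm ‹_› ‹_›
    have := abs_eq_zero.1 this
    linarith
  have : (⇑φ : X → ℝ) = ⇑ψ := by
    apply Continuous.ext_on hu φ.continuous ψ.continuous
    rintro x ⟨k, rfl⟩
    exact hk k
  exact ContinuousLinearMap.ext fun x => congrFun this x

lemma norm_comp_isometryEquiv (φ : X →L[ℝ] ℝ) (T : X ≃ₗᵢ[ℝ] X) :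
    ‖φ.comp (T.toLinearIsometry.toContinuousLinearMap)‖ = ‖φ‖ := by
  apply le_antisymm
  · apply ContinuousLinearMap.opNorm_le_bound _ (norm_nonneg φ)
    intro x
    calc ‖φ (T x)‖ ≤ ‖φ‖ * ‖T x‖ := φ.le_opNorm _
      _ = ‖φ‖ * ‖x‖ := by rw [T.norm_map]
  · apply ContinuousLinearMap.opNorm_le_bound _ (norm_nonneg _)
    intro x
    have : φ x = φ.comp (T.toLinearIsometry.toContinuousLinearMap) (T.symm x) := by
      simp
    rw [this]
    calc ‖φ.comp (T.toLinearIsometry.toContinuousLinearMap) (T.symm x)‖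
        ≤ ‖φ.comp (T.toLinearIsometry.toContinuousLinearMap)‖ * ‖T.symm x‖ :=
          ContinuousLinearMap.le_opNorm _ _
      _ = ‖φ.comp (T.toLinearIsometry.toContinuousLinearMap)‖ * ‖x‖ := by
          rw [T.symm.norm_map]

end Aux2

/-- The norm of a separable real Banach space whose linear isometry group acts
transitively on the unit sphere is Gâteaux differentiable; equivalently, every point
of the unit sphere has a unique support functional. -/
theorem unique_support_functional_of_transitive
    {X : Type*} [NormedAddCommGroup X] [NormedSpace ℝ X] [CompleteSpace X]
    [TopologicalSpace.SeparableSpace X]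
    (htrans : ∀ x y : X, ‖x‖ = 1 → ‖y‖ = 1 → ∃ T : X ≃ₗᵢ[ℝ] X, T x = y) :
    ∀ x : X, ‖x‖ = 1 → ∃! φ : X →L[ℝ] ℝ, ‖φ‖ = 1 ∧ φ x = 1 := by
  intro y hy
  have : Nonempty X := ⟨0⟩
  obtain ⟨u, hu⟩ := TopologicalSpace.exists_dense_seq X
  -- Baire category: find a point `z` outside all bad sets
  have hdense : Dense (⋂ p : ℕ × ℕ, (badGapSet (u p.1) p.2)ᶜ) := by
    apply dense_iInter_of_isOpen
    · intro p
      exact (isClosed_badGapSet (u p.1) p.2).isOpen_compl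
    · intro p
      exact interior_eq_empty_iff_dense_compl.1 (interior_badGapSet (u p.1) p.2)
  obtain ⟨z, hz1, hz2⟩ := hdense.exists_mem_open (isOpen_ball (x := y) (ε := 1/2))
    ⟨y, mem_ball_self (by norm_num)⟩
  have hznorm : (1:ℝ)/2 < ‖z‖ := by
    have := mem_ball_iff_norm.1 hz2
    have h2 := norm_sub_norm_le z y
    have := abs_le.1 (abs_norm_sub_norm_le z y)
    rw [hy] at this
    linarith [this.1]
  have hzne : z ≠ 0 := by
    intro h; rw [h, norm_zero] at hznorm; linarith
  have hgap : ∀ k n : ℕ, ∃ s < (0:ℝ), ∃ t > (0:ℝ),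
      (‖z + t • u k‖ - ‖z‖)/t - (‖z + s • u k‖ - ‖z‖)/s < 1/(n+1) := by
    intro k n
    have hzc : z ∈ (badGapSet (u k) n)ᶜ := by
      have := mem_iInter.1 hz1 (k, n)
      exact this
    simp only [mem_compl_iff, badGapSet, mem_setOf_eq] at hzc
    push_neg at hzc
    obtain ⟨s, hs, t, ht, hst⟩ := hzc
    exact ⟨s, hs, t, ht, hst⟩
  -- normalized point
  set z₀ : X := ‖z‖⁻¹ • z with hz₀def
  have hznz : ‖z‖ ≠ 0 := norm_ne_zero_iff.2 hzne
  have hz₀norm : ‖z₀‖ = 1 := by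
    rw [hz₀def, norm_smul, norm_inv, norm_norm, inv_mul_cancel₀ hznz]
  have hzeq : z = ‖z‖ • z₀ := by
    rw [hz₀def, smul_inv_smul₀ hznz]
  -- uniqueness of support functionals at z₀
  have huniq : ∀ φ ψ : X →L[ℝ] ℝ, ‖φ‖ = 1 → φ z₀ = 1 → ‖ψ‖ = 1 → ψ z₀ = 1 →
      φ = ψ := by
    intro φ ψ hφn hφz hψn hψz
    apply eq_of_gap_small u hu z hgap φ ψ hφn.le hψn.le
    · conv_lhs => rw [hzeq]
      rw [map_smul, smul_eq_mul, hφz, mul_one]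
    · conv_lhs => rw [hzeq]
      rw [map_smul, smul_eq_mul, hψz, mul_one]
  -- existence at z₀
  obtain ⟨g, hg1, hg2⟩ := exists_dual_vector ℝ z₀ (by
    intro h; rw [h] at hz₀norm; norm_num at hz₀norm)
  rw [hz₀norm] at hg2
  -- transfer to y
  obtain ⟨T, hT⟩ := htrans z₀ y hz₀norm hy
  have hTsymm : T.symm y = z₀ := by rw [← hT, T.symm_apply_apply]
  refine ⟨g.comp (T.symm.toLinearIsometry.toContinuousLinearMap), ⟨?_, ?_⟩, ?_⟩
  · rw [norm_comp_isometryEquiv g T.symm]; exact hg1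
  · show g (T.symm y) = 1
    rw [hTsymm]
    exact_mod_cast hg2
  · rintro φ ⟨hφn, hφy⟩
    have h1 : (φ.comp (T.toLinearIsometry.toContinuousLinearMap)) z₀ = 1 := by
      show φ (T z₀) = 1
      rw [hT]; exact hφy
    have h2 : (g.comp (T.symm.toLinearIsometry.toContinuousLinearMap)).comp
        (T.toLinearIsometry.toContinuousLinearMap) = g := by
      ext x
      show g (T.symm (T x)) = g x
      rw [T.symm_apply_apply]
    have h3 : ((g.comp (T.symm.toLinearIsometry.toContinuousLinearMap)).comp
        (T.toLinearIsometry.toContinuousLinearMap)) z₀ = 1 := by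
      rw [h2]; exact_mod_cast hg2
    have h4 := huniq (φ.comp (T.toLinearIsometry.toContinuousLinearMap))
      ((g.comp (T.symm.toLinearIsometry.toContinuousLinearMap)).comp
        (T.toLinearIsometry.toContinuousLinearMap))
      (by rw [norm_comp_isometryEquiv φ T, hφn]) h1
      (by rw [norm_comp_isometryEquiv _ T, norm_comp_isometryEquiv g T.symm, hg1]) h3
    ext x
    have := congrArg (fun f : X →L[ℝ] ℝ => f (T.symm x)) h4
    show φ x = g (T.symm x)
    calc φ x = φ (T (T.symm x)) := by rw [T.apply_symm_apply]
      _ = (φ.comp (T.toLinearIsometry.toContinuousLinearMap)) (T.symm x) := rfl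
      _ = g (T.symm (T (T.symm x))) := this
      _ = g (T.symm x) := by rw [T.symm_apply_apply]
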